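/- The r-star with m = n − r + 1 edges on n vertices has exactly 2^{r−1}(n − r + 1) versals, and for r ≥ 3 this quantity is at least n + 1. -/

import Mathlib

/-- The `r`-star with `m = n - r + 1` edges on `n` vertices has exactly
`2 ^ (r - 1) * (n - r + 1)` versals, and for `r ≥ 3` this is at least `n + 1`. -/
theorem stmt_11 {V : Type*} [Fintype V] [DecidableEq V] (E : Finset (Finset V)) (r n : ℕ)
    (hn : n = Fintype.card V) (hr : 1 ≤ r) (hunif : ∀ e ∈ E, e.card = r)
    (C : Finset V) (hC : C.card = r - 1) (hcore : ∀ e ∈ E, C ⊆ e)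
    (hm : E.card = n - r + 1) (hm2 : 1 < E.card)
    (hout : ∀ v ∈ Cᶜ, (E.filter (fun e => v ∈ e)).card = 1) :
    {S : Finset V | ∃ e ∈ E, ∀ f ∈ E, f ≠ e → (S ∩ e).card < (S ∩ f).card}.ncard =
        2 ^ (r - 1) * (n - r + 1) ∧
      (3 ≤ r → n + 1 ≤
        {S : Finset V | ∃ e ∈ E, ∀ f ∈ E, f ≠ e → (S ∩ e).card < (S ∩ f).card}.ncard) := by
  classical
  obtain ⟨e0, he0⟩ : E.Nonempty := Finset.card_pos.mp (by omega)
  have hVne : Nonempty V := by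
    have h : e0.Nonempty := Finset.card_pos.mp (by rw [hunif e0 he0]; omega)
    exact ⟨h.choose⟩
  have htipcard : ∀ e ∈ E, (e \ C).card = 1 := by
    intro e he
    rw [Finset.card_sdiff_of_subset (hcore e he), hunif e he, hC]
    omega
  have htipex : ∀ e : Finset V, ∃ v, e ∈ E → e \ C = {v} := by
    intro e
    by_cases he : e ∈ E
    · obtain ⟨v, hv⟩ := Finset.card_eq_one.mp (htipcard e he)
      exact ⟨v, fun _ => hv⟩
    · exact ⟨Classical.arbitrary V, fun h => absurd h he⟩
  choose tip htip using htipex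
  have htmem : ∀ e ∈ E, tip e ∈ e ∧ tip e ∉ C := by
    intro e he
    have h : tip e ∈ e \ C := by rw [htip e he]; exact Finset.mem_singleton_self _
    exact ⟨(Finset.mem_sdiff.mp h).1, (Finset.mem_sdiff.mp h).2⟩
  have hins : ∀ e ∈ E, e = insert (tip e) C := by
    intro e he
    have h1 : (e \ C) ∪ C = e := Finset.sdiff_union_of_subset (hcore e he)
    rw [htip e he, ← Finset.insert_eq] at h1
    exact h1.symm
  have htinj : ∀ e ∈ E, ∀ f ∈ E, tip e = tip f → e = f := by
    intro e he f hf h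
    rw [hins e he, hins f hf, h]
  have htne : ∀ e ∈ E, ∀ f ∈ E, f ≠ e → tip f ∉ e := by
    intro e he f hf hfe h
    rw [hins e he, Finset.mem_insert] at h
    rcases h with h | h
    · exact hfe (htinj f hf e he h)
    · exact (htmem f hf).2 h
  have hsurj : ∀ v, v ∉ C → ∃ e ∈ E, tip e = v := by
    intro v hv
    have h1 := hout v (Finset.mem_compl.mpr hv)
    have h2 : (E.filter (fun e => v ∈ e)).Nonempty := Finset.card_pos.mp (by omega)
    obtain ⟨e, he⟩ := h2
    rw [Finset.mem_filter] at he
    refine ⟨e, he.1, ?_⟩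
    have h3 : v ∈ e \ C := Finset.mem_sdiff.mpr ⟨he.2, hv⟩
    rw [htip e he.1, Finset.mem_singleton] at h3
    exact h3.symm
  have hcount : ∀ (S : Finset V), ∀ f ∈ E,
      (S ∩ f).card = (S ∩ C).card + (if tip f ∈ S then 1 else 0) := by
    intro S f hf
    conv_lhs => rw [hins f hf]
    by_cases h : tip f ∈ S
    · rw [Finset.inter_insert_of_mem h, if_pos h,
        Finset.card_insert_of_notMem (by simp [(htmem f hf).2])]
    · rw [Finset.inter_insert_of_notMem h, if_neg h]; omega
  have hTrec : ∀ e ∈ E, ∀ T ⊆ C, (T ∪ (Cᶜ \ e)) ∩ C = T := by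
    intro e he T hT
    rw [Finset.union_inter_distrib_right, Finset.inter_eq_left.mpr hT]
    have h2 : (Cᶜ \ e) ∩ C = ∅ := by
      ext v
      simp only [Finset.mem_inter, Finset.mem_sdiff, Finset.mem_compl,
        Finset.notMem_empty, iff_false]
      tauto
    rw [h2, Finset.union_empty]
  set F : Finset (Finset V) :=
    E.biUnion (fun e => (C.powerset).image (fun T => T ∪ (Cᶜ \ e))) with hF
  have htipnotS : ∀ e ∈ E, ∀ T ⊆ C, tip e ∉ T ∪ (Cᶜ \ e) := by
    intro e he T hT h
    rcases Finset.mem_union.mp h with h | h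
    · exact (htmem e he).2 (hT h)
    · exact (Finset.mem_sdiff.mp h).2 (htmem e he).1
  have htipinS : ∀ e ∈ E, ∀ T ⊆ C, ∀ f ∈ E, f ≠ e → tip f ∈ T ∪ (Cᶜ \ e) := by
    intro e he T hT f hf hfe
    exact Finset.mem_union_right _ (Finset.mem_sdiff.mpr
      ⟨Finset.mem_compl.mpr (htmem f hf).2, htne e he f hf hfe⟩)
  have hset : {S : Finset V | ∃ e ∈ E, ∀ f ∈ E, f ≠ e → (S ∩ e).card < (S ∩ f).card} = ↑F := by
    ext S
    simp only [Set.mem_setOf_eq, Finset.coe_biUnion, Set.mem_iUnion, Finset.mem_coe,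
      Finset.mem_image, Finset.mem_powerset, hF]
    constructor
    · rintro ⟨e, he, hlt⟩
      have hne : tip e ∉ S := by
        obtain ⟨f, hf, hfe⟩ := Finset.exists_mem_ne hm2 e
        have h := hlt f hf hfe
        rw [hcount S e he, hcount S f hf] at h
        intro h1
        rw [if_pos h1] at h
        split_ifs at h <;> omega
      have hmemS : ∀ f ∈ E, f ≠ e → tip f ∈ S := by
        intro f hf hfe
        have h := hlt f hf hfe
        rw [hcount S e he, hcount S f hf, if_neg hne] at h
        by_contra h2
        rw [if_neg h2] at h
        omega
      have hSeq : S = (S ∩ C) ∪ (Cᶜ \ e) := by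
        ext v
        simp only [Finset.mem_union, Finset.mem_inter, Finset.mem_sdiff, Finset.mem_compl]
        constructor
        · intro hv
          by_cases hvC : v ∈ C
          · exact Or.inl ⟨hv, hvC⟩
          · obtain ⟨f, hf, hft⟩ := hsurj v hvC
            have hfe : f ≠ e := by
              rintro rfl
              exact hne (hft ▸ hv)
            refine Or.inr ⟨hvC, ?_⟩
            rw [← hft]
            exact htne e he f hf hfe
        · rintro (⟨hv, _⟩ | ⟨hvC, hve⟩)
          · exact hv
          · obtain ⟨f, hf, hft⟩ := hsurj v hvC
            have hfe : f ≠ e := by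
              rintro rfl
              exact hve (hft ▸ (htmem f hf).1)
            rw [← hft]
            exact hmemS f hf hfe
      exact ⟨e, he, S ∩ C, Finset.inter_subset_right, hSeq.symm⟩
    · rintro ⟨e, he, T, hT, rfl⟩
      refine ⟨e, he, fun f hf hfe => ?_⟩
      rw [hcount _ e he, hcount _ f hf, if_neg (htipnotS e he T hT),
        if_pos (htipinS e he T hT f hf hfe)]
      omega
  have hdisj : ∀ e ∈ E, ∀ f ∈ E, e ≠ f →
      Disjoint ((C.powerset).image (fun T => T ∪ (Cᶜ \ e)))
        ((C.powerset).image (fun T => T ∪ (Cᶜ \ f))) := by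
    intro e he f hf hef
    rw [Finset.disjoint_left]
    intro S hSe hSf
    rw [Finset.mem_image] at hSe hSf
    obtain ⟨T, hT, rfl⟩ := hSe
    obtain ⟨T', hT', hEq⟩ := hSf
    rw [Finset.mem_powerset] at hT hT'
    have h1 : tip f ∈ T ∪ (Cᶜ \ e) := htipinS e he T hT f hf (Ne.symm hef)
    rw [← hEq] at h1
    exact htipnotS f hf T' hT' h1
  have himg : ∀ e ∈ E, ((C.powerset).image (fun T => T ∪ (Cᶜ \ e))).card = 2 ^ (r - 1) := by
    intro e he
    rw [Finset.card_image_of_injOn, Finset.card_powerset, hC]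
    intro T hT T' hT' hEq
    rw [Finset.mem_coe, Finset.mem_powerset] at hT hT'
    have h := congrArg (· ∩ C) hEq
    simpa [hTrec e he T hT, hTrec e he T' hT'] using h
  have hFcard : F.card = 2 ^ (r - 1) * (n - r + 1) := by
    rw [hF, Finset.card_biUnion hdisj, Finset.sum_congr rfl himg, Finset.sum_const,
      smul_eq_mul, hm, mul_comm]
  have hncard : {S : Finset V | ∃ e ∈ E, ∀ f ∈ E, f ≠ e →
      (S ∩ e).card < (S ∩ f).card}.ncard = 2 ^ (r - 1) * (n - r + 1) := by
    rw [hset, Set.ncard_coe_finset, hFcard]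
  refine ⟨hncard, fun hr3 => ?_⟩
  rw [hncard]
  have hm' : 2 ≤ n - r + 1 := by omega
  have hnr : r + 1 ≤ n := by omega
  set m := n - r + 1 with hmdef
  have h1 : r ≤ 2 ^ (r - 1) := by
    have h := Nat.lt_two_pow_self (n := r - 1)
    omega
  have h2 : r + m ≤ r * m := by nlinarith
  have h3 : r * m ≤ 2 ^ (r - 1) * m := Nat.mul_le_mul_right m h1
  have h4 : n + 1 = r + m := by omega
  rw [h4]
  exact le_trans h2 h3
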